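/- Let A ∈ I and let 𝔞 be an ideal of 𝒪 for which the divisibility chain δ₁(A) | 𝔞 | δ₂(A)·δ₁(A)⁻¹ does NOT hold. Then μ_𝔞(A) = 0, i.e. no right coset U·B contained in U A U has 𝔤(B) = 𝔞. -/

import Mathlib

open Matrix

/-- The right coset `U·B` with respect to the unimodular group
`U = GL₂(𝒪)` (matrices over `𝒪` whose determinant is a unit). -/
def rightCoset' {O : Type*} [CommRing O] (B : Matrix (Fin 2) (Fin 2) O) :
    Set (Matrix (Fin 2) (Fin 2) O) :=
  {X | ∃ P : Matrix (Fin 2) (Fin 2) O, IsUnit P.det ∧ X = P * B}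

/-- The double coset `U A U`. -/
def doubleCoset' {O : Type*} [CommRing O] (A : Matrix (Fin 2) (Fin 2) O) :
    Set (Matrix (Fin 2) (Fin 2) O) :=
  {X | ∃ P Q : Matrix (Fin 2) (Fin 2) O, IsUnit P.det ∧ IsUnit Q.det ∧ X = P * A * Q}

/-- The first determinantal divisor `δ₁(A)`. -/
def delta1 {O : Type*} [CommRing O] (A : Matrix (Fin 2) (Fin 2) O) : Ideal O :=
  Ideal.span {A 0 0, A 0 1, A 1 0, A 1 1}

/-- The second determinantal divisor `δ₂(A) = (det A)𝒪`. -/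
def delta2 {O : Type*} [CommRing O] (A : Matrix (Fin 2) (Fin 2) O) : Ideal O :=
  Ideal.span {A.det}

/-- The g.c.d. `𝔤(A)` of the first column of `A`. -/
def gcol {O : Type*} [CommRing O] (A : Matrix (Fin 2) (Fin 2) O) : Ideal O :=
  Ideal.span {A 0 0, A 1 0}

/-- `μ_𝔞(A)`: the number of right cosets `U·B` contained in `U A U` whose first column has
g.c.d. `𝔞`. -/
noncomputable def muIdeal {O : Type*} [CommRing O] (A : Matrix (Fin 2) (Fin 2) O)
    (𝔞 : Ideal O) : ℕ :=
  Nat.card {S : Set (Matrix (Fin 2) (Fin 2) O) //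
    ∃ B, S = rightCoset' B ∧ S ⊆ doubleCoset' A ∧ gcol B = 𝔞}

/-- `T` is a transversal of the quotient of ideals `I/J`: it consists of elements of `I` and
contains exactly one representative of each residue class of `I` modulo `J`. -/
def IsTransversal {O : Type*} [CommRing O] (I J : Ideal O) (T : Set O) : Prop :=
  T ⊆ (I : Set O) ∧ ∀ x ∈ I, ∃! t, t ∈ T ∧ x - t ∈ J

lemma entry_mem_delta1 {O : Type*} [CommRing O] (A : Matrix (Fin 2) (Fin 2) O)
    (i j : Fin 2) : A i j ∈ delta1 A := by
  fin_cases i <;> fin_cases j <;> apply Ideal.subset_span <;> simp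

lemma delta1_mul_le {O : Type*} [CommRing O] (P A Q : Matrix (Fin 2) (Fin 2) O) :
    delta1 (P * A * Q) ≤ delta1 A := by
  have hmem : ∀ i j : Fin 2, (P * A * Q) i j ∈ delta1 A := by
    intro i j
    simp only [Matrix.mul_apply]
    apply Ideal.sum_mem
    intro l _
    apply Ideal.mul_mem_right
    apply Ideal.sum_mem
    intro k _
    exact Ideal.mul_mem_left _ _ (entry_mem_delta1 A k l)
  apply Ideal.span_le.mpr
  intro x hx
  simp only [Set.mem_insert_iff, Set.mem_singleton_iff] at hx
  rcases hx with h|h|h|h <;> subst h <;> apply hmem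

lemma delta1_eq_of_units {O : Type*} [CommRing O] (P A Q : Matrix (Fin 2) (Fin 2) O)
    (hP : IsUnit P.det) (hQ : IsUnit Q.det) : delta1 (P * A * Q) = delta1 A := by
  refine le_antisymm (delta1_mul_le P A Q) ?_
  have hid : P⁻¹ * (P * A * Q) * Q⁻¹ = A := by
    rw [show P⁻¹ * (P * A * Q) * Q⁻¹ = (P⁻¹ * P) * A * (Q * Q⁻¹) by
      simp only [Matrix.mul_assoc], Matrix.nonsing_inv_mul P hP,
      Matrix.mul_nonsing_inv Q hQ, Matrix.one_mul, Matrix.mul_one]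
  conv_lhs => rw [← hid]
  exact delta1_mul_le _ _ _

lemma gcol_le_delta1 {O : Type*} [CommRing O] (B : Matrix (Fin 2) (Fin 2) O) :
    gcol B ≤ delta1 B := by
  apply Ideal.span_le.mpr
  intro x hx
  simp only [Set.mem_insert_iff, Set.mem_singleton_iff] at hx
  rcases hx with h|h <;> subst h <;> exact entry_mem_delta1 B _ _

lemma det_mem_gcol_mul_delta1 {O : Type*} [CommRing O] (B : Matrix (Fin 2) (Fin 2) O) :
    B.det ∈ gcol B * delta1 B := by
  rw [Matrix.det_fin_two]
  refine sub_mem ?_ ?_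
  · exact Ideal.mul_mem_mul (Ideal.subset_span (by simp)) (entry_mem_delta1 B 1 1)
  · rw [mul_comm (B 0 1)]
    exact Ideal.mul_mem_mul (Ideal.subset_span (by simp)) (entry_mem_delta1 B 0 1)

theorem stmt9 {O : Type*} [CommRing O] [IsDomain O] [IsDedekindDomain O]
    -- `𝒪` is norm-finite:
    (hnf : ∀ x : O, x ≠ 0 → Finite (O ⧸ Ideal.span {x}))
    (A : Matrix (Fin 2) (Fin 2) O) (hA : A.det ≠ 0)
    (𝔞 : Ideal O)
    -- the divisibility chain `δ₁(A) | 𝔞 | δ₂(A)·δ₁(A)⁻¹` does NOT hold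
    -- (divisibility of ideals is reverse inclusion):
    (h : ¬(𝔞 ≤ delta1 A ∧ delta2 A ≤ 𝔞 * delta1 A)) :
    muIdeal A 𝔞 = 0 ∧ ∀ B ∈ doubleCoset' A, gcol B ≠ 𝔞 := by
  have key : ∀ B ∈ doubleCoset' A, gcol B ≠ 𝔞 := by
    rintro B ⟨P, Q, hP, hQ, rfl⟩ hg
    apply h
    have hd1 : delta1 (P * A * Q) = delta1 A := delta1_eq_of_units P A Q hP hQ
    constructor
    · rw [← hg, ← hd1]
      exact gcol_le_delta1 _
    · have hdet : (P * A * Q).det ∈ 𝔞 * delta1 A := by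
        rw [← hg, ← hd1]
        exact det_mem_gcol_mul_delta1 _
      rw [Matrix.det_mul, Matrix.det_mul] at hdet
      obtain ⟨u, hu⟩ := hP
      obtain ⟨v, hv⟩ := hQ
      have : A.det = ↑u⁻¹ * ↑v⁻¹ * (P.det * A.det * Q.det) := by
        rw [← hu, ← hv]
        rw [show (↑u⁻¹ : O) * ↑v⁻¹ * (↑u * A.det * ↑v) = (↑u⁻¹ * ↑u) * (↑v⁻¹ * ↑v) * A.det by ring,
          Units.inv_mul, Units.inv_mul, one_mul, one_mul]
      apply Ideal.span_le.mpr
      intro x hx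
      simp only [Set.mem_singleton_iff] at hx
      subst hx
      rw [this]
      exact Ideal.mul_mem_left _ _ hdet
  refine ⟨?_, key⟩
  have : IsEmpty {S : Set (Matrix (Fin 2) (Fin 2) O) //
      ∃ B, S = rightCoset' B ∧ S ⊆ doubleCoset' A ∧ gcol B = 𝔞} := by
    constructor
    rintro ⟨S, B, rfl, hsub, hg⟩
    have hB : B ∈ rightCoset' B := ⟨1, by simp, by simp⟩
    exact key B (hsub hB) hg
  simp [muIdeal, Nat.card_of_isEmpty]
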